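/- Let (x_n)_{n∈I} be a frame for H with canonical dual (y_n), and E = {1,...,k} a finite set satisfying the MRC. For each n ∈ E^c define the column vector (α_{n1},...,α_{nk})^T = (G − I)⁻¹ (⟨y_n,x_1⟩,...,⟨y_n,x_k⟩)^T, where G is the k×k matrix with entries G_{mi} = ⟨y_i, x_m⟩. Then v_n = y_n − Σ_{i=1}^k α_{ni} y_i, for n ∈ E^c, is the canonical dual frame of (x_n)_{n∈E^c}. -/

import Mathlib

noncomputable section

variable {H : Type*} [NormedAddCommGroup H] [InnerProductSpace ℂ H] [CompleteSpace H]

/-- `(x n)_{n ∈ I}` is a frame for `H` with frame bounds `A`, `B`. -/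
def IsFrameOn (x : ℕ → H) (I : Set ℕ) (A B : ℝ) : Prop :=
  0 < A ∧ 0 < B ∧ ∀ h : H,
    Summable (fun n : I => ‖(inner ℂ (x n) h : ℂ)‖ ^ 2) ∧
    A * ‖h‖ ^ 2 ≤ ∑' n : I, ‖(inner ℂ (x n) h : ℂ)‖ ^ 2 ∧
    ∑' n : I, ‖(inner ℂ (x n) h : ℂ)‖ ^ 2 ≤ B * ‖h‖ ^ 2

/-- `(y n)_{n ∈ I}` is the canonical dual of `(x n)_{n ∈ I}`. -/
def IsCanonicalDualOn (y x : ℕ → H) (I : Set ℕ) : Prop :=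
  ∃ S Sinv : H →L[ℂ] H,
    (∀ h : H, HasSum (fun n : I => (inner ℂ (x n) h : ℂ) • x n) (S h)) ∧
    Sinv.comp S = ContinuousLinearMap.id ℂ H ∧
    S.comp Sinv = ContinuousLinearMap.id ℂ H ∧
    ∀ n ∈ I, y n = Sinv (x n)

lemma sum_Icc_one_eq_sum_fin {M : Type*} [AddCommMonoid M] (k : ℕ) (f : ℕ → M) :
    ∑ n ∈ Finset.Icc 1 k, f n = ∑ i : Fin k, f ((i : ℕ) + 1) := by
  induction k with
  | zero => simp
  | succ n ih =>
    rw [Finset.sum_Icc_succ_top (by omega), ih, Fin.sum_univ_castSucc]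
    simp

/-- For a frame `(x n)_{n ∈ I}` with canonical dual `(y n)` and `E = {1,…,k}` satisfying
the MRC: with `G` the `k×k` matrix `G_{m i} = ⟨y i, x m⟩`, the vectors
`v n = y n − Σ_{i=1}^k α_{n i} y i`, where `(α_{n 1},…,α_{n k})ᵀ = (G − I)⁻¹ (⟨y n, x 1⟩,…,⟨y n, x k⟩)ᵀ`,
form the canonical dual frame of `(x n)_{n ∈ I \ E}`. -/
theorem stmt6 (x y : ℕ → H) (I : Set ℕ) (A B : ℝ) (hx : IsFrameOn x I A B)
    (hy : IsCanonicalDualOn y x I) (k : ℕ)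
    (hE : ((Finset.Icc 1 k : Finset ℕ) : Set ℕ) ⊂ I)
    (hMRC : Dense ((Submodule.span ℂ
      (x '' (I \ (Finset.Icc 1 k : Finset ℕ))) : Submodule ℂ H) : Set H))
    (G : Matrix (Fin k) (Fin k) ℂ)
    (hG : ∀ m i : Fin k, G m i = (inner ℂ (x ((m : ℕ) + 1)) (y ((i : ℕ) + 1)) : ℂ))
    (α : ℕ → Fin k → ℂ)
    (hα : ∀ n : ℕ, α n = Matrix.mulVec (G - 1)⁻¹ (fun m : Fin k => (inner ℂ (x ((m : ℕ) + 1)) (y n) : ℂ))) :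
    IsCanonicalDualOn (fun n => y n - ∑ i : Fin k, α n i • y ((i : ℕ) + 1)) x
      (I \ (Finset.Icc 1 k : Finset ℕ)) := by
  classical
  obtain ⟨S, Sinv, hS, hIS, hSI, hyS⟩ := hy
  set E : Finset ℕ := Finset.Icc 1 k with hEdef
  have hEI : (E : Set ℕ) ⊆ I := hE.subset
  have hmemI : ∀ i : Fin k, ((i : ℕ) + 1) ∈ I := by
    intro i
    apply hEI
    simp only [hEdef, Finset.coe_Icc, Set.mem_Icc]
    omega
  have hSinvS : ∀ v : H, Sinv (S v) = v := by
    intro v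
    have := ContinuousLinearMap.ext_iff.mp hIS v
    simpa using this
  have hSSinv : ∀ v : H, S (Sinv v) = v := by
    intro v
    have := ContinuousLinearMap.ext_iff.mp hSI v
    simpa using this
  have hSy : ∀ n ∈ I, S (y n) = x n := by
    intro n hn
    rw [hyS n hn, hSSinv]
  -- abbreviations
  set x' : Fin k → H := fun i => x ((i : ℕ) + 1) with hx'
  set y' : Fin k → H := fun i => y ((i : ℕ) + 1) with hy'
  set c : H → Fin k → ℂ := fun h m => (inner ℂ (x' m) h : ℂ) with hc
  set D : Matrix (Fin k) (Fin k) ℂ := (1 - G)⁻¹ with hD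
  -- finite rank operators
  set T : H →L[ℂ] H := ∑ i : Fin k, ((innerSL ℂ (x' i)).smulRight (x' i)) with hT
  set K : H →L[ℂ] H := ∑ i : Fin k, ((innerSL ℂ (x' i)).smulRight (y' i)) with hK
  set L : H →L[ℂ] H := ∑ i : Fin k, ∑ m : Fin k, D i m • ((innerSL ℂ (x' m)).smulRight (y' i)) with hL
  have hTapp : ∀ h : H, T h = ∑ i : Fin k, c h i • x' i := by
    intro h
    simp [hT, ContinuousLinearMap.sum_apply, ContinuousLinearMap.smulRight_apply, innerSL_apply_apply, hc]
  have hKapp : ∀ h : H, K h = ∑ i : Fin k, c h i • y' i := by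
    intro h
    simp [hK, ContinuousLinearMap.sum_apply, ContinuousLinearMap.smulRight_apply, innerSL_apply_apply, hc]
  have hLapp : ∀ h : H, L h = ∑ i : Fin k, (D.mulVec (c h)) i • y' i := by
    intro h
    simp only [hL, ContinuousLinearMap.sum_apply, ContinuousLinearMap.smul_apply,
      ContinuousLinearMap.smulRight_apply, innerSL_apply_apply]
    refine Finset.sum_congr rfl fun i _ => ?_
    rw [Matrix.mulVec, dotProduct, Finset.sum_smul]
    refine Finset.sum_congr rfl fun m _ => ?_
    rw [smul_smul]
  have hcsum : ∀ (a : Fin k → ℂ) (m : Fin k),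
      (inner ℂ (x' m) (∑ i : Fin k, a i • y' i) : ℂ) = G.mulVec a m := by
    intro a m
    rw [inner_sum, Matrix.mulVec, dotProduct]
    refine Finset.sum_congr rfl fun i _ => ?_
    rw [inner_smul_right, hG m i, mul_comm]
  -- splitting of sums over I into the E part and the rest
  have hsplit : ∀ (f : ℕ → H) (s : H), HasSum (fun n : I => f n) s →
      HasSum (fun n : ↥(I \ (E : Set ℕ)) => f n) (s - ∑ n ∈ E, f n) := by
    intro f s hsum
    have h1 : HasSum (I.indicator f) s := hasSum_subtype_iff_indicator.mp hsum
    have h2 : HasSum ((E : Set ℕ).indicator f) (∑ n ∈ E, f n) := by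
      have h3 : HasSum ((E : Set ℕ).indicator f) (∑ n ∈ E, (E : Set ℕ).indicator f n) :=
        hasSum_sum_of_ne_finset_zero (fun b hb => Set.indicator_of_notMem (by simpa using hb) f)
      rwa [Finset.sum_congr rfl (fun n hn => Set.indicator_of_mem (by simpa using hn) f)] at h3
    have h4 := h1.sub h2
    have h5 : (fun n => I.indicator f n - (E : Set ℕ).indicator f n)
        = (I \ (E : Set ℕ)).indicator f := by
      funext n
      by_cases hnE : n ∈ (E : Set ℕ)
      · have hnI : n ∈ I := hEI hnE
        simp [Set.indicator, hnE, hnI]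
      · by_cases hnI : n ∈ I <;> simp [Set.indicator, hnE, hnI]
    rw [h5] at h4
    exact hasSum_subtype_iff_indicator.mpr h4
  -- the determinant of 1 - G is nonzero
  have hdet : IsUnit (1 - G).det := by
    rw [isUnit_iff_ne_zero]
    intro h0
    obtain ⟨a, ha0, ha⟩ := Matrix.exists_mulVec_eq_zero_iff.mpr h0
    set g : H := ∑ i : Fin k, a i • y' i with hg
    have hcg : ∀ m : Fin k, (inner ℂ (x' m) g : ℂ) = a m := by
      intro m
      have h1 : ((1 - G).mulVec a) m = 0 := congrFun ha m
      rw [Matrix.sub_mulVec, Matrix.one_mulVec, Pi.sub_apply] at h1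
      rw [hg, hcsum]
      linear_combination -h1
    have hgy : HasSum (fun n : I => (inner ℂ (x n) g : ℂ) • y n) g := by
      have h2 := Sinv.hasSum (hS g)
      rw [hSinvS g] at h2
      have h3 : (fun n : I => Sinv ((inner ℂ (x n) g : ℂ) • x n))
          = fun n : I => (inner ℂ (x n) g : ℂ) • y n := by
        funext n
        rw [map_smul, ← hyS n n.2]
      rwa [h3] at h2
    have hg0 : HasSum (fun n : ↥(I \ (E : Set ℕ)) => (inner ℂ (x n) g : ℂ) • y n) 0 := by
      have h4 := hsplit (fun n => (inner ℂ (x n) g : ℂ) • y n) g hgy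
      have hEsum : ∑ n ∈ E, (inner ℂ (x n) g : ℂ) • y n = g := by
        rw [hEdef, sum_Icc_one_eq_sum_fin, hg]
        exact Finset.sum_congr rfl fun i _ => by rw [show (inner ℂ (x ((i : ℕ) + 1)) g : ℂ) = a i from hcg i]
      rw [hEsum, sub_self] at h4
      exact h4
    have hgx0 : HasSum (fun n : ↥(I \ (E : Set ℕ)) => (inner ℂ (x n) g : ℂ) • x n) 0 := by
      have h6 := S.hasSum hg0
      rw [map_zero] at h6
      have h7 : (fun n : ↥(I \ (E : Set ℕ)) => S ((inner ℂ (x n) g : ℂ) • y n))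
          = fun n : ↥(I \ (E : Set ℕ)) => (inner ℂ (x n) g : ℂ) • x n := by
        funext n
        rw [map_smul, hSy n n.2.1]
      rwa [h7] at h6
    have hre : HasSum (fun n : ↥(I \ (E : Set ℕ)) => Complex.normSq (inner ℂ (x n) g : ℂ)) 0 := by
      have h8 := (innerSL ℂ g).hasSum hgx0
      rw [map_zero] at h8
      have h9 : (fun n : ↥(I \ (E : Set ℕ)) => (innerSL ℂ g) ((inner ℂ (x n) g : ℂ) • x n))
          = fun n : ↥(I \ (E : Set ℕ)) => (Complex.normSq (inner ℂ (x n) g : ℂ) : ℂ) := by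
        funext n
        rw [map_smul, innerSL_apply_apply, smul_eq_mul, ← inner_conj_symm g (x (n : ℕ)),
          Complex.mul_conj]
      rw [h9] at h8
      have h10 := Complex.reCLM.hasSum h8
      rw [map_zero] at h10
      simpa using h10
    have hczero : ∀ n : ℕ, n ∈ I \ (E : Set ℕ) → (inner ℂ (x n) g : ℂ) = 0 := by
      intro n hn
      have h11 := le_hasSum hre ⟨n, hn⟩ (fun j _ => Complex.normSq_nonneg _)
      exact Complex.normSq_eq_zero.mp (le_antisymm h11 (Complex.normSq_nonneg _))
    have hker : Submodule.span ℂ (x '' (I \ (E : Set ℕ))) ≤ LinearMap.ker (innerSL ℂ g : H →ₗ[ℂ] ℂ) := by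
      rw [Submodule.span_le]
      rintro _ ⟨n, hn, rfl⟩
      simp only [SetLike.mem_coe, LinearMap.mem_ker, ContinuousLinearMap.coe_coe, innerSL_apply_apply]
      rw [← inner_conj_symm, hczero n hn, map_zero]
    have horthbot : (Submodule.span ℂ (x '' (I \ (E : Set ℕ))))ᗮ = ⊥ := by
      apply Submodule.topologicalClosure_eq_top_iff.mp
      apply SetLike.ext'
      rw [Submodule.topologicalClosure_coe, hMRC.closure_eq]
      rfl
    have hgmem : g ∈ (Submodule.span ℂ (x '' (I \ (E : Set ℕ))))ᗮ := by
      rw [Submodule.mem_orthogonal]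
      intro u hu
      have h12 := hker hu
      rw [LinearMap.mem_ker] at h12
      simp only [ContinuousLinearMap.coe_coe, innerSL_apply_apply] at h12
      rw [← inner_conj_symm, h12, map_zero]
    have hgz : g = 0 := by
      rw [horthbot] at hgmem
      simpa using hgmem
    apply ha0
    funext m
    have h13 := hcg m
    rw [hgz] at h13
    simpa using h13.symm
  -- matrix inverse identities
  have hD1 : (1 - G) * D = 1 := Matrix.mul_nonsing_inv _ hdet
  have h1D : D * (1 - G) = 1 := Matrix.nonsing_inv_mul _ hdet
  have hGinv : (G - 1)⁻¹ = -D := by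
    apply Matrix.inv_eq_left_inv
    rw [neg_mul, ← mul_neg, neg_sub]
    exact h1D
  have hvec1 : ∀ v : Fin k → ℂ, D.mulVec v - G.mulVec (D.mulVec v) = v := by
    intro v
    calc D.mulVec v - G.mulVec (D.mulVec v) = (1 - G).mulVec (D.mulVec v) := by
          rw [Matrix.sub_mulVec, Matrix.one_mulVec]
      _ = v := by rw [Matrix.mulVec_mulVec, hD1, Matrix.one_mulVec]
  have hvec2 : ∀ v : Fin k → ℂ, D.mulVec (v - G.mulVec v) = v := by
    intro v
    calc D.mulVec (v - G.mulVec v) = D.mulVec ((1 - G).mulVec v) := by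
          rw [Matrix.sub_mulVec, Matrix.one_mulVec]
      _ = v := by rw [Matrix.mulVec_mulVec, h1D, Matrix.one_mulVec]
  -- coefficient identities
  have hcsub : ∀ u v : H, c (u - v) = c u - c v := by
    intro u v
    funext m
    simp [hc, inner_sub_right]
  have hcK : ∀ h : H, c (K h) = G.mulVec (c h) := by
    intro h
    funext m
    show (inner ℂ (x' m) (K h) : ℂ) = G.mulVec (c h) m
    rw [hKapp h]
    exact hcsum (c h) m
  have hcL : ∀ h : H, c (L h) = G.mulVec (D.mulVec (c h)) := by
    intro h
    funext m
    show (inner ℂ (x' m) (L h) : ℂ) = G.mulVec (D.mulVec (c h)) m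
    rw [hLapp h]
    exact hcsum (D.mulVec (c h)) m
  -- operator identities : (1 - K)(1 + L) = 1 = (1 + L)(1 - K)
  have hKR : (ContinuousLinearMap.id ℂ H - K).comp (ContinuousLinearMap.id ℂ H + L)
      = ContinuousLinearMap.id ℂ H := by
    ext h
    simp only [ContinuousLinearMap.comp_apply, ContinuousLinearMap.sub_apply,
      ContinuousLinearMap.add_apply, ContinuousLinearMap.id_apply]
    rw [map_add K, hKapp (L h), hcL h, hKapp h, hLapp h]
    have h16 : ∑ i : Fin k, (D.mulVec (c h)) i • y' i
        - (∑ i : Fin k, (c h) i • y' i + ∑ i : Fin k, (G.mulVec (D.mulVec (c h))) i • y' i) = 0 := by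
      rw [← Finset.sum_add_distrib, ← Finset.sum_sub_distrib]
      apply Finset.sum_eq_zero
      intro i _
      rw [← add_smul, ← sub_smul]
      convert zero_smul ℂ (y' i) using 2
      have h17 := congrFun (hvec1 (c h)) i
      simp only [Pi.sub_apply] at h17
      linear_combination h17
    rw [add_sub_assoc, h16, add_zero]
  have hRK : (ContinuousLinearMap.id ℂ H + L).comp (ContinuousLinearMap.id ℂ H - K)
      = ContinuousLinearMap.id ℂ H := by
    ext h
    simp only [ContinuousLinearMap.comp_apply, ContinuousLinearMap.sub_apply,
      ContinuousLinearMap.add_apply, ContinuousLinearMap.id_apply]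
    rw [hLapp (h - K h), hcsub h (K h), hcK h, hvec2 (c h), hKapp h]
    rw [sub_add_cancel]
  -- the two operators
  set S' : H →L[ℂ] H := S - T with hS'def
  set Sinv' : H →L[ℂ] H := (ContinuousLinearMap.id ℂ H + L).comp Sinv with hSinv'def
  have hfact : S' = S.comp (ContinuousLinearMap.id ℂ H - K) := by
    ext h
    simp only [hS'def, ContinuousLinearMap.sub_apply, ContinuousLinearMap.comp_apply,
      ContinuousLinearMap.id_apply, map_sub]
    congr 1
    rw [hKapp h, hTapp h, map_sum]
    refine Finset.sum_congr rfl fun i _ => ?_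
    rw [map_smul]
    congr 1
    exact (hSy _ (hmemI i)).symm
  refine ⟨S', Sinv', ?_, ?_, ?_, ?_⟩
  · intro h
    have h18 := hsplit (fun n => (inner ℂ (x n) h : ℂ) • x n) (S h) (hS h)
    have hTs : ∑ n ∈ E, (inner ℂ (x n) h : ℂ) • x n = T h := by
      rw [hEdef, sum_Icc_one_eq_sum_fin, hTapp h]
    rw [hTs] at h18
    simpa [hS'def, ContinuousLinearMap.sub_apply] using h18
  · rw [hfact, hSinv'def, ContinuousLinearMap.comp_assoc,
      ← ContinuousLinearMap.comp_assoc Sinv S (ContinuousLinearMap.id ℂ H - K), hIS,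
      ContinuousLinearMap.id_comp, hRK]
  · rw [hfact, hSinv'def, ContinuousLinearMap.comp_assoc,
      ← ContinuousLinearMap.comp_assoc (ContinuousLinearMap.id ℂ H - K)
        (ContinuousLinearMap.id ℂ H + L) Sinv, hKR, ContinuousLinearMap.id_comp, hSI]
  · intro n hn
    have hnI : n ∈ I := hn.1
    simp only [hSinv'def, ContinuousLinearMap.comp_apply, ContinuousLinearMap.add_apply,
      ContinuousLinearMap.id_apply]
    rw [← hyS n hnI, hLapp (y n)]
    rw [hα n, hGinv]
    have hcyn : (fun m : Fin k => (inner ℂ (x ((m : ℕ) + 1)) (y n) : ℂ)) = c (y n) := rfl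
    rw [hcyn, Matrix.neg_mulVec]
    simp [neg_smul, sub_neg_eq_add]
    rfl
  
end
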